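/- Given good 2^{k*−1}-colorings C^a of G*_{S^a} and C^b of G*_{S^b} (for any partition S_{k*} = S^a_{k*} ∪ S^b_{k*}), the merged coloring C defined by C(v_s^i) = C^a(v_s^i) for i ≤ 2^{k*−1}/p_s, C(v_s^i) = C^b(v_s^{i − 2^{k*−1}/p_s}) + 2^{k*−1} for larger i (streams with p_s ≤ 2^{k*−1}), C(v_s^1) = C^a(v_s^1) for s ∈ S^a_{k*}, and C(v_s^1) = C^b(v_s^1) + 2^{k*−1} for s ∈ S^b_{k*}, is a good 2^{k*}-coloring of G*_S. -/

import Mathlib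

/-- A "good" partial coloring for the multiplicity interval graph `G*_S`:
streams `s` have intervals `[a s, b s - 1]` and periods `2 ^ k s`; with hyperperiod `2 ^ K`
each stream has `2 ^ (K - k s)` copies indexed by `i < 2 ^ (K - k s)`.  `Q` restricts to a
subset of the streams.  The coloring must be proper (copies with intersecting intervals get
distinct colors) and each copy `i` must receive a color in the window
`[i * 2 ^ k s + 1, (i + 1) * 2 ^ k s]`. -/
def GoodOn {S : Type} (a b k : S → ℕ) (K : ℕ) (Q : S → Prop) (C : S → ℕ → ℕ) : Prop :=
  (∀ s i s' i', Q s → Q s' → i < 2 ^ (K - k s) → i' < 2 ^ (K - k s') →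
      (s ≠ s' ∨ i ≠ i') →
      (Finset.Icc (a s) (b s - 1) ∩ Finset.Icc (a s') (b s' - 1)).Nonempty →
      C s i ≠ C s' i')
  ∧ ∀ s, Q s → ∀ i, i < 2 ^ (K - k s) →
      i * 2 ^ k s + 1 ≤ C s i ∧ C s i ≤ (i + 1) * 2 ^ k s

theorem stmt15 (S : Type) [Fintype S] (kstar : ℕ) (hk1 : 1 ≤ kstar)
    (a b k : S → ℕ) (hk : ∀ s, k s ≤ kstar) (P : S → Bool)
    (Ca Cb : S → ℕ → ℕ)
    (hCa : GoodOn a b (fun s => min (k s) (kstar - 1)) (kstar - 1)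
        (fun s => k s < kstar ∨ P s = false) Ca)
    (hCb : GoodOn a b (fun s => min (k s) (kstar - 1)) (kstar - 1)
        (fun s => k s < kstar ∨ P s = true) Cb) :
    GoodOn a b k kstar (fun _ => True)
      (fun s i =>
        if k s < kstar then
          (if i < 2 ^ (kstar - 1 - k s) then Ca s i
           else Cb s (i - 2 ^ (kstar - 1 - k s)) + 2 ^ (kstar - 1))
        else if P s = false then Ca s 0 else Cb s 0 + 2 ^ (kstar - 1)) := by
  obtain ⟨hPa, hWa⟩ := hCa
  obtain ⟨hPb, hWb⟩ := hCb
  beta_reduce at hPa hWa hPb hWb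
  have h2 : (1:ℕ) ≤ 2 ^ (kstar - 1) := Nat.one_le_two_pow
  -- upper bound on Ca / Cb colors
  have hCaB : ∀ s i, ((k s < kstar ∨ P s = false) : Prop) →
      i < 2 ^ (kstar - 1 - min (k s) (kstar - 1)) → Ca s i ≤ 2 ^ (kstar - 1) := by
    intro s i hQ hi
    have h := (hWa s hQ i hi).2
    have hle : (i + 1) * 2 ^ (min (k s) (kstar-1)) ≤
        2 ^ (kstar - 1 - min (k s) (kstar-1)) * 2 ^ (min (k s) (kstar-1)) :=
      Nat.mul_le_mul_right _ hi
    rw [← pow_add, Nat.sub_add_cancel (min_le_right _ _)] at hle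
    omega
  have classify : ∀ t j, j < 2 ^ (kstar - k t) →
      (∃ jj, (if k t < kstar then
          (if j < 2 ^ (kstar - 1 - k t) then Ca t j
           else Cb t (j - 2 ^ (kstar - 1 - k t)) + 2 ^ (kstar - 1))
         else if P t = false then Ca t 0 else Cb t 0 + 2 ^ (kstar - 1)) = Ca t jj
        ∧ jj < 2 ^ (kstar - 1 - min (k t) (kstar-1))
        ∧ (k t < kstar ∨ P t = false)
        ∧ ((k t < kstar ∧ jj = j) ∨ (k t = kstar ∧ jj = 0 ∧ j = 0)))
    ∨ (∃ jj, (if k t < kstar then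
          (if j < 2 ^ (kstar - 1 - k t) then Ca t j
           else Cb t (j - 2 ^ (kstar - 1 - k t)) + 2 ^ (kstar - 1))
         else if P t = false then Ca t 0 else Cb t 0 + 2 ^ (kstar - 1)) = Cb t jj + 2 ^ (kstar - 1)
        ∧ jj < 2 ^ (kstar - 1 - min (k t) (kstar-1))
        ∧ (k t < kstar ∨ P t = true)
        ∧ ((k t < kstar ∧ jj + 2 ^ (kstar - 1 - k t) = j) ∨ (k t = kstar ∧ jj = 0 ∧ j = 0))) := by
    intro t j hj
    by_cases hkt : k t < kstar
    · have hmin : min (k t) (kstar - 1) = k t := by omega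
      have hE2 : 2 ^ (kstar - k t) = 2 * 2 ^ (kstar - 1 - k t) := by
        rw [show kstar - k t = (kstar - 1 - k t) + 1 by omega, pow_succ]; ring
      by_cases hjE : j < 2 ^ (kstar - 1 - k t)
      · refine Or.inl ⟨j, by simp [hkt, hjE], ?_, Or.inl hkt, Or.inl ⟨hkt, rfl⟩⟩
        rw [hmin]; exact hjE
      · refine Or.inr ⟨j - 2 ^ (kstar - 1 - k t), by simp [hkt, hjE], ?_, Or.inl hkt,
          Or.inl ⟨hkt, by omega⟩⟩
        rw [hmin]; omega
    · have hkeq : k t = kstar := by have := hk t; omega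
      have hj0 : j = 0 := by
        have h1 : 2 ^ (kstar - k t) = 1 := by rw [show kstar - k t = 0 by omega, pow_zero]
        omega
      have hr : (0:ℕ) < 2 ^ (kstar - 1 - min (k t) (kstar-1)) := Nat.pow_pos (by norm_num)
      by_cases hP : P t = false
      · exact Or.inl ⟨0, by simp [hkt, hP, hj0], hr, Or.inr hP, Or.inr ⟨hkeq, rfl, hj0⟩⟩
      · have hPt : P t = true := by
          cases h : P t with
          | false => exact absurd h hP
          | true => rfl
        exact Or.inr ⟨0, by simp [hkt, hPt, hj0], hr, Or.inr hPt, Or.inr ⟨hkeq, rfl, hj0⟩⟩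
  constructor
  · intro s i s' i' _ _ hi hi' hne hint
    rcases classify s i hi with ⟨ii, heq, hr, hQ, htag⟩ | ⟨ii, heq, hr, hQ, htag⟩ <;>
      rcases classify s' i' hi' with ⟨ii', heq', hr', hQ', htag'⟩ | ⟨ii', heq', hr', hQ', htag'⟩ <;>
        simp only [heq, heq']
    · -- Ca vs Ca
      refine hPa s ii s' ii' hQ hQ' hr hr' ?_ hint
      rcases hne with hne | hne
      · exact Or.inl hne
      · by_cases hss : s = s'
        · subst hss
          refine Or.inr ?_
          rcases htag with ⟨h1, h2⟩ | ⟨h1, h2, h3⟩ <;>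
            rcases htag' with ⟨h1', h2'⟩ | ⟨h1', h2', h3'⟩ <;> omega
        · exact Or.inl hss
    · -- Ca vs Cb
      have hb1 := (hWb s' hQ' ii' hr').1
      have ha := hCaB s ii hQ hr
      omega
    · -- Cb vs Ca
      have hb1 := (hWb s hQ ii hr).1
      have ha := hCaB s' ii' hQ' hr'
      omega
    · -- Cb vs Cb
      have hne2 : Cb s ii ≠ Cb s' ii' := by
        refine hPb s ii s' ii' hQ hQ' hr hr' ?_ hint
        rcases hne with hne | hne
        · exact Or.inl hne
        · by_cases hss : s = s'
          · subst hss
            refine Or.inr ?_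
            rcases htag with ⟨h1, h2⟩ | ⟨h1, h2, h3⟩ <;>
              rcases htag' with ⟨h1', h2'⟩ | ⟨h1', h2', h3'⟩ <;> omega
          · exact Or.inl hss
      omega
  · intro s _ i hi
    by_cases hks : k s < kstar
    · have hmin : min (k s) (kstar - 1) = k s := by omega
      have hE2 : 2 ^ (kstar - k s) = 2 * 2 ^ (kstar - 1 - k s) := by
        rw [show kstar - k s = (kstar - 1 - k s) + 1 by omega, pow_succ]; ring
      have hEk : 2 ^ (kstar - 1 - k s) * 2 ^ (k s) = 2 ^ (kstar - 1) := by
        rw [← pow_add, Nat.sub_add_cancel (by omega : k s ≤ kstar - 1)]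
      simp only [hks, if_true]
      by_cases hjE : i < 2 ^ (kstar - 1 - k s)
      · simp only [hjE, if_true]
        have h := hWa s (Or.inl hks) i (by rw [hmin]; exact hjE)
        rw [hmin] at h
        exact h
      · simp only [hjE, if_false]
        set E := 2 ^ (kstar - 1 - k s) with hE
        have hjlt : i - E < E := by omega
        have h := hWb s (Or.inl hks) (i - E) (by rw [hmin]; exact hjlt)
        rw [hmin] at h
        have hi1 : i * 2 ^ k s = (i - E) * 2 ^ k s + 2 ^ (kstar - 1) := by
          rw [← hEk, ← Nat.add_mul]
          congr 1
          omega
        have hi2 : (i + 1) * 2 ^ k s = (i - E + 1) * 2 ^ k s + 2 ^ (kstar - 1) := by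
          rw [← hEk, ← Nat.add_mul]
          congr 1
          omega
        omega
    · have hkeq : k s = kstar := by have := hk s; omega
      have hi0 : i = 0 := by
        have h1 : 2 ^ (kstar - k s) = 1 := by rw [show kstar - k s = 0 by omega, pow_zero]
        omega
      have hmin : min (k s) (kstar - 1) = kstar - 1 := by omega
      have hr : (0:ℕ) < 2 ^ (kstar - 1 - min (k s) (kstar-1)) := Nat.pow_pos (by norm_num)
      have h2k : 2 ^ (k s) = 2 * 2 ^ (kstar - 1) := by
        rw [hkeq]
        conv_lhs => rw [show kstar = (kstar - 1) + 1 from by omega]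
        rw [pow_succ]; ring
      simp only [hks, if_false, hi0]
      by_cases hP : P s = false
      · have h := hWa s (Or.inr hP) 0 hr
        rw [hmin] at h
        rw [if_pos hP]
        omega
      · have hPt : P s = true := by
          cases h : P s with
          | false => exact absurd h hP
          | true => rfl
        have h := hWb s (Or.inr hPt) 0 hr
        rw [hmin] at h
        rw [if_neg hP]
        omega
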